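/- Let α > 0 and let a = (a_n)_{n≥1} be a finitely supported sequence of complex numbers. Define f(t) := ∑_{n=1}^∞ a_n n^{−1/2 − it} for t ∈ ℝ. Then (α/π) · ∫_{−∞}^{∞} |f(t)|² / (α² + t²) dt = ∑_{m=1}^∞ ∑_{n=1}^∞ a_m · conj(a_n) · (mn)^{α−1/2} / max(m,n)^{2α}. -/

import Mathlib

open Complex MeasureTheory Set Filter
open scoped FourierTransform Topology

lemma aux_integral_cexp_Ioi {c : ℂ} (hc : 0 < c.re) :
    ∫ x in Ioi (0:ℝ), Complex.exp (-(c * x)) = 1 / c := by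
  have hc0 : c ≠ 0 := fun h => by simp [h] at hc
  have hderiv : ∀ x ∈ Ici (0:ℝ),
      HasDerivAt (fun x : ℝ => -Complex.exp (-(c * x)) / c) (Complex.exp (-(c * x))) x := by
    intro x _
    have h1 : HasDerivAt (fun z : ℂ => -Complex.exp (-(c * z)) / c)
        (Complex.exp (-(c * x))) (x : ℂ) := by
      have h2 : HasDerivAt (fun z : ℂ => -(c * z)) (-c) (x : ℂ) := by
        simpa using ((hasDerivAt_id ((x : ℝ) : ℂ)).const_mul c).fun_neg
      have h3 := (h2.cexp.div_const c).fun_neg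
      have hfe : (fun z : ℂ => -Complex.exp (-(c * z)) / c)
          = fun z : ℂ => -(Complex.exp (-(c * z)) / c) := by
        funext z; rw [neg_div]
      rw [hfe]
      refine h3.congr_deriv ?_
      rw [mul_neg, neg_div, neg_neg, mul_div_assoc, div_self hc0, mul_one]
    simpa using h1.comp_ofReal
  have hint : IntegrableOn (fun x : ℝ => Complex.exp (-(c * x))) (Ioi 0) := by
    apply Integrable.mono' (exp_neg_integrableOn_Ioi 0 hc)
    · exact (Complex.continuous_exp.comp (by continuity)).aestronglyMeasurable
    · filter_upwards with x
      rw [Complex.norm_exp]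
      simp [neg_mul]
  have htend : Tendsto (fun x : ℝ => -Complex.exp (-(c * x)) / c) atTop (𝓝 0) := by
    rw [tendsto_zero_iff_norm_tendsto_zero]
    have : (fun x : ℝ => ‖-Complex.exp (-(c * x)) / c‖)
        = fun x : ℝ => Real.exp (-(c.re * x)) / ‖c‖ := by
      ext x
      rw [norm_div, norm_neg, Complex.norm_exp]
      simp
    rw [this]
    have h4 : Tendsto (fun x : ℝ => Real.exp (-(c.re * x))) atTop (𝓝 0) :=
      Real.tendsto_exp_atBot.comp
        (tendsto_neg_atBot_iff.mpr ((tendsto_const_mul_atTop_of_pos hc).mpr tendsto_id))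
    simpa using h4.div_const ‖c‖
  have := integral_Ioi_of_hasDerivAt_of_tendsto' hderiv hint htend
  rw [this]
  simp [neg_div, one_div]

lemma aux_integrable_exp_abs {α : ℝ} (hα : 0 < α) :
    Integrable (fun x : ℝ => Real.exp (-α * |x|)) := by
  have hIoi : IntegrableOn (fun x : ℝ => Real.exp (-α * |x|)) (Ioi 0) := by
    refine (exp_neg_integrableOn_Ioi 0 hα).congr_fun (fun x hx => ?_) measurableSet_Ioi
    rw [abs_of_pos hx]
  have hIic : IntegrableOn (fun x : ℝ => Real.exp (-α * |x|)) (Iic 0) := by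
    rw [← Measure.map_neg_eq_self (volume : Measure ℝ)]
    have m : MeasurableEmbedding fun x : ℝ => -x := (Homeomorph.neg ℝ).measurableEmbedding
    rw [m.integrableOn_map_iff]
    simp_rw [Function.comp_def, abs_neg, neg_preimage, neg_Iic, neg_zero]
    exact (integrableOn_Ici_iff_integrableOn_Ioi (by finiteness)).mpr hIoi
  rw [← integrableOn_univ, ← Iic_union_Ioi (a := (0:ℝ))]
  exact hIic.union hIoi

lemma aux_integrable_inv_sq_add {α : ℝ} (hα : 0 < α) :
    Integrable (fun t : ℝ => (α ^ 2 + t ^ 2)⁻¹) := by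
  have h0 : Integrable (fun x : ℝ => (1 + x ^ 2)⁻¹) := integrable_inv_one_add_sq
  have h1 : Integrable (fun x : ℝ => (1 + (α⁻¹ * x) ^ 2)⁻¹) := by
    exact (integrable_comp_mul_left_iff (fun x : ℝ => (1 + x ^ 2)⁻¹)
      (inv_ne_zero hα.ne')).mpr h0
  have h2 := h1.const_mul (α ^ 2)⁻¹
  refine h2.congr (Filter.Eventually.of_forall fun x => ?_)
  have hx : (0:ℝ) < α ^ 2 + x ^ 2 := by positivity
  field_simp

lemma aux_fourier_exp_abs {α : ℝ} (hα : 0 < α) (ξ : ℝ) :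
    𝓕 (fun x : ℝ => (Real.exp (-α * |x|) : ℂ)) ξ
      = ((2 * α / (α ^ 2 + (2 * Real.pi * ξ) ^ 2) : ℝ) : ℂ) := by
  have hc1 : (0:ℝ) < ((α : ℂ) + (2 * Real.pi * ξ) * Complex.I).re := by simp [hα]
  have hc2 : (0:ℝ) < ((α : ℂ) - (2 * Real.pi * ξ) * Complex.I).re := by simp [hα]
  have hint : Integrable (fun x : ℝ =>
      Complex.exp ((-2 * Real.pi * x * ξ : ℝ) * Complex.I) * (Real.exp (-α * |x|) : ℂ)) := by
    refine Integrable.mono' ((aux_integrable_exp_abs hα)) ?_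
      (Filter.Eventually.of_forall fun x => ?_)
    · exact ((Complex.continuous_exp.comp (by continuity)).mul
        (Complex.continuous_ofReal.comp (by continuity))).aestronglyMeasurable
    · rw [norm_mul, Complex.norm_exp]
      simp only [Complex.ofReal_mul, Complex.mul_re, Complex.ofReal_re, Complex.I_re,
        mul_zero, Complex.ofReal_im, Complex.I_im, mul_one, sub_self, zero_sub,
        Real.exp_zero, one_mul]
      rw [Complex.norm_real, Real.norm_eq_abs, Real.abs_exp]
      simp [neg_mul]
  have hIoi : ∫ x in Ioi (0:ℝ),
      Complex.exp ((-2 * Real.pi * x * ξ : ℝ) * Complex.I) * (Real.exp (-α * |x|) : ℂ)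
      = 1 / ((α : ℂ) + (2 * Real.pi * ξ) * Complex.I) := by
    rw [← aux_integral_cexp_Ioi hc1]
    refine setIntegral_congr_fun measurableSet_Ioi (fun x hx => ?_)
    rw [abs_of_pos hx, Complex.ofReal_exp, ← Complex.exp_add]
    congr 1
    push_cast
    ring
  have hIic : ∫ x in Iic (0:ℝ),
      Complex.exp ((-2 * Real.pi * x * ξ : ℝ) * Complex.I) * (Real.exp (-α * |x|) : ℂ)
      = 1 / ((α : ℂ) - (2 * Real.pi * ξ) * Complex.I) := by
    rw [← neg_zero, ← integral_comp_neg_Ioi, ← aux_integral_cexp_Ioi hc2]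
    refine setIntegral_congr_fun measurableSet_Ioi (fun x hx => ?_)
    rw [abs_neg, abs_of_pos hx, Complex.ofReal_exp, ← Complex.exp_add]
    congr 1
    push_cast
    ring
  rw [Real.fourier_real_eq_integral_exp_smul]
  simp_rw [smul_eq_mul]
  rw [← intervalIntegral.integral_Iic_add_Ioi (hint.integrableOn) (hint.integrableOn), hIic, hIoi]
  have h1 : ((α : ℂ) + (2 * Real.pi * ξ) * Complex.I) ≠ 0 := fun h => by simp [h] at hc1
  have h2 : ((α : ℂ) - (2 * Real.pi * ξ) * Complex.I) ≠ 0 := fun h => by simp [h] at hc2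
  have h3 : ((α ^ 2 + (2 * Real.pi * ξ) ^ 2 : ℝ) : ℂ) ≠ 0 := by
    rw [Complex.ofReal_ne_zero]
    positivity
  rw [div_add_div _ _ h2 h1, one_mul, mul_one]
  rw [show ((α:ℂ) + (2*Real.pi*ξ)*Complex.I) + ((α:ℂ) - (2*Real.pi*ξ)*Complex.I)
      = ((2*α : ℝ):ℂ) by push_cast; ring]
  rw [show ((α:ℂ) - (2*Real.pi*ξ)*Complex.I) * ((α:ℂ) + (2*Real.pi*ξ)*Complex.I)
      = ((α^2 + (2*Real.pi*ξ)^2 : ℝ):ℂ) by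
    have hI : Complex.I * Complex.I = -1 := Complex.I_mul_I
    push_cast
    ring_nf
    rw [Complex.I_sq]
    ring]
  rw [Complex.ofReal_div]

lemma aux_poisson {α : ℝ} (hα : 0 < α) (b : ℝ) :
    ∫ t : ℝ, Complex.exp (Complex.I * b * t) / ((α ^ 2 + t ^ 2 : ℝ) : ℂ)
      = ((Real.pi / α * Real.exp (-α * |b|) : ℝ) : ℂ) := by
  set g : ℝ → ℂ := fun x => (Real.exp (-α * |x|) : ℂ) with hg
  have hg_int : Integrable g := (aux_integrable_exp_abs hα).ofReal
  have hg_cont : Continuous g := by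
    apply Complex.continuous_ofReal.comp
    exact Real.continuous_exp.comp (by continuity)
  have hF : 𝓕 g = fun ξ : ℝ => ((2 * α / (α ^ 2 + (2 * Real.pi * ξ) ^ 2) : ℝ) : ℂ) :=
    funext fun ξ => aux_fourier_exp_abs hα ξ
  have hF_int : Integrable (𝓕 g) := by
    rw [hF]
    apply Integrable.ofReal
    have h1 : Integrable (fun ξ : ℝ => (α ^ 2 + (2 * Real.pi * ξ) ^ 2)⁻¹) := by
      have := (integrable_comp_mul_left_iff (fun t : ℝ => (α ^ 2 + t ^ 2)⁻¹)
        (by positivity : (2 * Real.pi : ℝ) ≠ 0)).mpr (aux_integrable_inv_sq_add hα)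
      simpa using this
    exact h1.const_mul (2 * α)
  have hinv := hg_int.fourierInv_fourier_eq hF_int (hg_cont.continuousAt (x := b))
  rw [Real.fourierInv_eq_fourier_neg,
    Real.fourier_real_eq_integral_exp_smul, hF] at hinv
  -- change of variables ξ = t / (2π)
  have hchg := MeasureTheory.Measure.integral_comp_mul_left
    (fun t : ℝ => Complex.exp (Complex.I * b * t) * ((α ^ 2 + t ^ 2 : ℝ) : ℂ)⁻¹)
    (2 * Real.pi)
  simp_rw [smul_eq_mul] at hinv
  have e1 : ∀ v : ℝ, Complex.exp (((-2 * Real.pi * v * -b : ℝ) : ℂ) * Complex.I)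
      * ((2 * α / (α ^ 2 + (2 * Real.pi * v) ^ 2) : ℝ) : ℂ)
      = ((2 * α : ℝ) : ℂ) * (Complex.exp (Complex.I * b * ((2 * Real.pi * v : ℝ) : ℂ))
          * (((α ^ 2 + (2 * Real.pi * v) ^ 2 : ℝ) : ℂ))⁻¹) := by
    intro v
    have harg : ((-2 * Real.pi * v * -b : ℝ) : ℂ) * Complex.I
        = Complex.I * b * ((2 * Real.pi * v : ℝ) : ℂ) := by push_cast; ring
    rw [harg, Complex.ofReal_div]
    ring
  simp_rw [e1] at hinv
  rw [MeasureTheory.integral_const_mul] at hinv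
  rw [hchg] at hinv
  have h2π : |(2 * Real.pi)⁻¹| = (2 * Real.pi)⁻¹ := abs_of_pos (by positivity)
  rw [h2π, Complex.real_smul] at hinv
  set K := ∫ y : ℝ, Complex.exp (Complex.I * b * (y : ℂ)) * (((α ^ 2 + y ^ 2 : ℝ) : ℂ))⁻¹
    with hK
  have hkey : ((2 * α : ℝ) : ℂ) * (((2 * Real.pi)⁻¹ : ℝ) : ℂ) * K
      = ((Real.exp (-α * |b|) : ℝ) : ℂ) := by
    rw [mul_assoc]; exact hinv
  have hne : ((2 * α : ℝ) : ℂ) * (((2 * Real.pi)⁻¹ : ℝ) : ℂ) ≠ 0 := by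
    apply mul_ne_zero <;> rw [Complex.ofReal_ne_zero] <;> positivity
  have hgoal : (∫ t : ℝ, Complex.exp (Complex.I * b * t) / ((α ^ 2 + t ^ 2 : ℝ) : ℂ)) = K := by
    rw [hK]
    simp_rw [div_eq_mul_inv]
  rw [hgoal]
  apply mul_left_cancel₀ hne
  rw [hkey, ← Complex.ofReal_mul, ← Complex.ofReal_mul, Complex.ofReal_inj]
  field_simp

lemma aux_real {α x y : ℝ} (hx : 0 < x) (hy : 0 < y) :
    Real.exp (-(1/2) * (Real.log x + Real.log y)) * Real.exp (-α * |Real.log y - Real.log x|)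
      = (x * y) ^ (α - 1/2) / max x y ^ (2 * α) := by
  rcases le_total x y with h | h
  · rw [max_eq_right h, _root_.abs_of_nonneg (sub_nonneg.mpr (Real.log_le_log hx h))]
    rw [Real.rpow_def_of_pos (mul_pos hx hy), Real.rpow_def_of_pos hy,
      Real.log_mul hx.ne' hy.ne', ← Real.exp_sub, ← Real.exp_add]
    congr 1; ring
  · rw [max_eq_left h, _root_.abs_of_nonpos (sub_nonpos.mpr (Real.log_le_log hy h))]
    rw [Real.rpow_def_of_pos (mul_pos hx hy), Real.rpow_def_of_pos hx,
      Real.log_mul hx.ne' hy.ne', ← Real.exp_sub, ← Real.exp_add]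
    congr 1; ring

lemma aux_pair_eq (α : ℝ) (m n : ℕ+) (t : ℝ) :
    ((m : ℂ) ^ (-(1/2 : ℂ) - Complex.I * (t : ℂ))
        * (starRingEnd ℂ) ((n : ℂ) ^ (-(1/2 : ℂ) - Complex.I * (t : ℂ))))
        / ((α ^ 2 + t ^ 2 : ℝ) : ℂ)
      = ((Real.exp (-(1/2) * (Real.log (m : ℝ) + Real.log (n : ℝ))) : ℝ) : ℂ)
          * (Complex.exp (Complex.I * ((Real.log (n : ℝ) - Real.log (m : ℝ) : ℝ) : ℂ) * (t : ℂ))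
              / ((α ^ 2 + t ^ 2 : ℝ) : ℂ)) := by
  have hm : (0:ℝ) < (m : ℝ) := by exact_mod_cast m.pos
  have hn : (0:ℝ) < (n : ℝ) := by exact_mod_cast n.pos
  set Lm := Real.log (m : ℝ) with hLm
  set Ln := Real.log (n : ℝ) with hLn
  have hmc : ((m : ℂ)) = (((m : ℝ) : ℂ)) := by push_cast; ring
  have hnc : ((n : ℂ)) = (((n : ℝ) : ℂ)) := by push_cast; ring
  have hmne : ((m : ℝ) : ℂ) ≠ 0 := by rw [Complex.ofReal_ne_zero]; exact hm.ne'
  have hnne : ((n : ℝ) : ℂ) ≠ 0 := by rw [Complex.ofReal_ne_zero]; exact hn.ne'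
  rw [hmc, hnc, Complex.cpow_def_of_ne_zero hmne, Complex.cpow_def_of_ne_zero hnne,
    ← Complex.ofReal_log hm.le, ← Complex.ofReal_log hn.le, ← Complex.exp_conj]
  rw [← hLm, ← hLn]
  rw [← Complex.exp_add]
  have harg : (Lm : ℂ) * (-(1/2 : ℂ) - Complex.I * (t : ℂ))
      + (starRingEnd ℂ) ((Ln : ℂ) * (-(1/2 : ℂ) - Complex.I * (t : ℂ)))
      = ((-(1/2) * (Lm + Ln) : ℝ) : ℂ) + Complex.I * ((Ln - Lm : ℝ) : ℂ) * (t : ℂ) := by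
    simp only [map_mul, map_sub, map_neg, Complex.conj_ofReal, Complex.conj_I,
      map_div₀, map_ofNat, map_one]
    push_cast
    ring
  rw [harg, Complex.exp_add, Complex.ofReal_exp]
  ring

lemma aux_integrable_kernel {α : ℝ} (hα : 0 < α) (b : ℝ) :
    MeasureTheory.Integrable (fun t : ℝ =>
      Complex.exp (Complex.I * (b : ℂ) * (t : ℂ)) / ((α ^ 2 + t ^ 2 : ℝ) : ℂ)) := by
  refine MeasureTheory.Integrable.mono' (aux_integrable_inv_sq_add hα) ?_
    (Filter.Eventually.of_forall fun t => ?_)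
  · apply Continuous.aestronglyMeasurable
    refine Continuous.div (by continuity) (by continuity) fun t => ?_
    rw [Complex.ofReal_ne_zero]
    positivity
  · rw [norm_div, Complex.norm_exp]
    have h1 : (Complex.I * (b : ℂ) * (t : ℂ)).re = 0 := by simp
    rw [h1, Real.exp_zero, Complex.norm_real, Real.norm_eq_abs,
      _root_.abs_of_pos (by positivity : (0:ℝ) < α ^ 2 + t ^ 2), one_div]

lemma aux_pair {α : ℝ} (hα : 0 < α) (m n : ℕ+) :
    ∫ t : ℝ, ((m : ℂ) ^ (-(1/2 : ℂ) - Complex.I * (t : ℂ))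
        * (starRingEnd ℂ) ((n : ℂ) ^ (-(1/2 : ℂ) - Complex.I * (t : ℂ))))
        / ((α ^ 2 + t ^ 2 : ℝ) : ℂ)
      = ((Real.pi / α : ℝ) : ℂ) *
          ((((m : ℝ) * (n : ℝ)) ^ (α - 1/2) / (max (m : ℝ) (n : ℝ)) ^ (2*α) : ℝ) : ℂ) := by
  have hm : (0:ℝ) < (m : ℝ) := by exact_mod_cast m.pos
  have hn : (0:ℝ) < (n : ℝ) := by exact_mod_cast n.pos
  set Lm := Real.log (m : ℝ) with hLm
  set Ln := Real.log (n : ℝ) with hLn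
  have hmc : ((m : ℂ)) = (((m : ℝ) : ℂ)) := by push_cast; ring
  have hnc : ((n : ℂ)) = (((n : ℝ) : ℂ)) := by push_cast; ring
  have hmne : ((m : ℝ) : ℂ) ≠ 0 := by rw [Complex.ofReal_ne_zero]; exact hm.ne'
  have hnne : ((n : ℝ) : ℂ) ≠ 0 := by rw [Complex.ofReal_ne_zero]; exact hn.ne'
  simp_rw [aux_pair_eq α m n]
  rw [MeasureTheory.integral_const_mul, aux_poisson hα]
  rw [← Complex.ofReal_mul, ← Complex.ofReal_mul, Complex.ofReal_inj]
  rw [show Real.exp (-(1/2) * (Lm + Ln)) * (Real.pi / α * Real.exp (-α * |Ln - Lm|))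
      = Real.pi / α * (Real.exp (-(1/2) * (Lm + Ln)) * Real.exp (-α * |Ln - Lm|)) by ring]
  rw [aux_real hm hn]

/-- For `α > 0` and a finitely supported sequence `a : ℕ+ → ℂ`, the Dirichlet polynomial
`f(t) = ∑_{n≥1} a_n n^{-1/2-it}` on the line `Re s = 1/2` satisfies
`(α/π) ∫_ℝ |f(t)|²/(α² + t²) dt = ∑_{m,n} a_m conj(a_n) (mn)^{α-1/2}/max(m,n)^{2α}`. -/
theorem integral_dirichlet_polynomial (α : ℝ) (hα : 0 < α) (a : ℕ+ → ℂ)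
    (ha : (Function.support a).Finite) :
    (((α / Real.pi) *
        ∫ t : ℝ, ‖∑' n : ℕ+, a n * (n : ℂ) ^ (-(1/2 : ℂ) - Complex.I * (t : ℂ))‖ ^ 2
          / (α^2 + t^2) : ℝ) : ℂ)
      = ∑' (m : ℕ+) (n : ℕ+), a m * (starRingEnd ℂ) (a n) *
          ((((m : ℝ) * (n : ℝ)) ^ (α - 1/2) / (max (m : ℝ) (n : ℝ)) ^ (2*α) : ℝ) : ℂ) := by
  classical
  set S := ha.toFinset with hS
  have hzero : ∀ n : ℕ+, n ∉ S → a n = 0 := fun n hn =>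
    Function.notMem_support.mp (fun hns => hn (ha.mem_toFinset.mpr hns))
  -- RHS reduction to finite sums
  have hR : (∑' (m : ℕ+) (n : ℕ+), a m * (starRingEnd ℂ) (a n) *
        ((((m : ℝ) * (n : ℝ)) ^ (α - 1/2) / (max (m : ℝ) (n : ℝ)) ^ (2*α) : ℝ) : ℂ))
      = ∑ m ∈ S, ∑ n ∈ S, a m * (starRingEnd ℂ) (a n) *
        ((((m : ℝ) * (n : ℝ)) ^ (α - 1/2) / (max (m : ℝ) (n : ℝ)) ^ (2*α) : ℝ) : ℂ) := by
    rw [tsum_eq_sum (s := S) (fun m hm => by simp [hzero m hm])]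
    exact Finset.sum_congr rfl fun m _ =>
      tsum_eq_sum (fun n hn => by simp [hzero n hn])
  rw [hR]
  -- pointwise expansion of the integrand
  have hfs : ∀ t : ℝ, (∑' n : ℕ+, a n * (n : ℂ) ^ (-(1/2 : ℂ) - Complex.I * (t : ℂ)))
      = ∑ n ∈ S, a n * (n : ℂ) ^ (-(1/2 : ℂ) - Complex.I * (t : ℂ)) := fun t =>
    tsum_eq_sum (fun n hn => by rw [hzero n hn, zero_mul])
  have hpt : ∀ t : ℝ,
      ((‖∑' n : ℕ+, a n * (n : ℂ) ^ (-(1/2 : ℂ) - Complex.I * (t : ℂ))‖ ^ 2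
          / (α^2 + t^2) : ℝ) : ℂ)
      = ∑ m ∈ S, ∑ n ∈ S, (a m * (starRingEnd ℂ) (a n)) *
          (((m : ℂ) ^ (-(1/2 : ℂ) - Complex.I * (t : ℂ))
            * (starRingEnd ℂ) ((n : ℂ) ^ (-(1/2 : ℂ) - Complex.I * (t : ℂ))))
            / ((α ^ 2 + t ^ 2 : ℝ) : ℂ)) := by
    intro t
    rw [Complex.ofReal_div, Complex.sq_norm, ← Complex.mul_conj, hfs t, map_sum,
      Finset.sum_mul_sum, Finset.sum_div]
    refine Finset.sum_congr rfl fun m _ => ?_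
    rw [Finset.sum_div]
    refine Finset.sum_congr rfl fun n _ => ?_
    rw [map_mul]
    ring
  have hintg : ∀ m ∈ S, ∀ n ∈ S, MeasureTheory.Integrable (fun t : ℝ =>
      (a m * (starRingEnd ℂ) (a n)) *
        (((m : ℂ) ^ (-(1/2 : ℂ) - Complex.I * (t : ℂ))
          * (starRingEnd ℂ) ((n : ℂ) ^ (-(1/2 : ℂ) - Complex.I * (t : ℂ))))
          / ((α ^ 2 + t ^ 2 : ℝ) : ℂ))) := by
    intro m _ n _
    apply MeasureTheory.Integrable.const_mul
    have hker := ((aux_integrable_kernel hα (Real.log (n : ℝ) - Real.log (m : ℝ))).const_mul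
      ((Real.exp (-(1/2) * (Real.log (m : ℝ) + Real.log (n : ℝ))) : ℝ) : ℂ))
    exact hker.congr (Filter.Eventually.of_forall fun t => (aux_pair_eq α m n t).symm)
  -- compute the LHS
  have hcast : ∀ F : ℝ → ℝ, ((∫ t : ℝ, F t : ℝ) : ℂ) = ∫ t : ℝ, ((F t : ℝ) : ℂ) :=
    fun F => (integral_ofReal).symm
  rw [Complex.ofReal_mul, hcast]
  simp_rw [hpt]
  rw [MeasureTheory.integral_finset_sum S (fun m hm =>
    MeasureTheory.integrable_finset_sum S (fun n hn => hintg m hm n hn))]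
  have hSinner : ∀ m ∈ S, (∫ t : ℝ, ∑ n ∈ S, (a m * (starRingEnd ℂ) (a n)) *
      (((m : ℂ) ^ (-(1/2 : ℂ) - Complex.I * (t : ℂ))
        * (starRingEnd ℂ) ((n : ℂ) ^ (-(1/2 : ℂ) - Complex.I * (t : ℂ))))
        / ((α ^ 2 + t ^ 2 : ℝ) : ℂ)))
      = ∑ n ∈ S, (a m * (starRingEnd ℂ) (a n)) * (((Real.pi / α : ℝ) : ℂ) *
          ((((m : ℝ) * (n : ℝ)) ^ (α - 1/2) / (max (m : ℝ) (n : ℝ)) ^ (2*α) : ℝ) : ℂ)) := by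
    intro m hm
    rw [MeasureTheory.integral_finset_sum S (fun n hn => hintg m hm n hn)]
    refine Finset.sum_congr rfl fun n _ => ?_
    rw [MeasureTheory.integral_const_mul, aux_pair hα m n]
  rw [Finset.sum_congr rfl hSinner, Finset.mul_sum]
  refine Finset.sum_congr rfl fun m _ => ?_
  rw [Finset.mul_sum]
  refine Finset.sum_congr rfl fun n _ => ?_
  have hcancel : ((α / Real.pi : ℝ) : ℂ) * ((Real.pi / α : ℝ) : ℂ) = 1 := by
    rw [← Complex.ofReal_mul]
    have : (α / Real.pi) * (Real.pi / α) = 1 := by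
      field_simp
    rw [this, Complex.ofReal_one]
  calc ((α / Real.pi : ℝ) : ℂ) * ((a m * (starRingEnd ℂ) (a n)) * (((Real.pi / α : ℝ) : ℂ) *
        ((((m : ℝ) * (n : ℝ)) ^ (α - 1/2) / (max (m : ℝ) (n : ℝ)) ^ (2*α) : ℝ) : ℂ)))
      = (((α / Real.pi : ℝ) : ℂ) * ((Real.pi / α : ℝ) : ℂ)) * ((a m * (starRingEnd ℂ) (a n)) *
        ((((m : ℝ) * (n : ℝ)) ^ (α - 1/2) / (max (m : ℝ) (n : ℝ)) ^ (2*α) : ℝ) : ℂ)) := by ring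
    _ = a m * (starRingEnd ℂ) (a n) *
        ((((m : ℝ) * (n : ℝ)) ^ (α - 1/2) / (max (m : ℝ) (n : ℝ)) ^ (2*α) : ℝ) : ℂ) := by
        rw [hcancel, one_mul]
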